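/- If m1 = m2 = m/k with k ≥ 2, then the unique pure Nash equilibrium (x1*, x2*) is given by x1* = x2* = (m / (4(1−p)k)) · (2k − (1+p) − √((2k − (1+p))² − 8(1−p))); moreover x1* + x2* ≤ (m1 + m2)/2, with equality if and only if m1 = m2 = m/2 (i.e., k = 2). -/

import Mathlib

/-- Average reward of pool 1 in the two-player miner's dilemma with betrayal,
where the total mining power is `m1 + m2 + t`. -/
noncomputable def r1 (m1 m2 t p x1 x2 : ℝ) : ℝ :=
  (m1*m2 + m1*x1 + p*m2*x2 - (1-p)*x1^2 - (1-p)*x1*x2) /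
    (((m1+m2+t) - (1-p)*(x1+x2)) * (m1*m2 + m1*x1 + m2*x2))

/-- Average reward of pool 2. -/
noncomputable def r2 (m1 m2 t p x1 x2 : ℝ) : ℝ :=
  (m1*m2 + m2*x2 + p*m1*x1 - (1-p)*x2^2 - (1-p)*x1*x2) /
    (((m1+m2+t) - (1-p)*(x1+x2)) * (m1*m2 + m1*x1 + m2*x2))

/-- `(x1, x2)` is a pure Nash equilibrium of the two-player miner's dilemma game. -/
noncomputable def IsNash (m1 m2 t p x1 x2 : ℝ) : Prop :=
  x1 ∈ Set.Icc 0 m1 ∧ x2 ∈ Set.Icc 0 m2 ∧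
  (∀ x ∈ Set.Icc (0:ℝ) m1, r1 m1 m2 t p x x2 ≤ r1 m1 m2 t p x1 x2) ∧
  (∀ x ∈ Set.Icc (0:ℝ) m2, r2 m1 m2 t p x1 x ≤ r2 m1 m2 t p x1 x2)

noncomputable def Nf (μ p x1 x2 : ℝ) : ℝ := μ*μ + μ*x1 + p*μ*x2 - (1-p)*x1^2 - (1-p)*x1*x2
noncomputable def Df (μ k p x1 x2 : ℝ) : ℝ := (k*μ - (1-p)*(x1+x2)) * (μ*μ + μ*x1 + μ*x2)
noncomputable def Gf (μ k p x1 x2 : ℝ) : ℝ :=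
  (μ - 2*(1-p)*x1 - (1-p)*x2) * Df μ k p x1 x2
    - Nf μ p x1 x2 * (μ^2*(k-(1-p)) - 2*(1-p)*μ*(x1+x2))

lemma r1_eq (μ t k p x1 x2 : ℝ) (hmt : μ + μ + t = k*μ) :
    r1 μ μ t p x1 x2 = Nf μ p x1 x2 / Df μ k p x1 x2 := by
  unfold r1 Nf Df; rw [hmt]

lemma r2_swap (μ t p x1 x2 : ℝ) :
    r2 μ μ t p x1 x2 = r1 μ μ t p x2 x1 := by
  unfold r1 r2
  have h1 : μ*μ + μ*x2 + p*μ*x1 - (1-p)*x2^2 - (1-p)*x1*x2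
      = μ*μ + μ*x2 + p*μ*x1 - (1-p)*x2^2 - (1-p)*x2*x1 := by ring
  have h2 : ((μ+μ+t) - (1-p)*(x1+x2)) * (μ*μ + μ*x1 + μ*x2)
      = ((μ+μ+t) - (1-p)*(x2+x1)) * (μ*μ + μ*x2 + μ*x1) := by ring
  rw [h1, h2]

lemma one_sided (L a δ : ℝ) (hδ : 0 < δ) (h : ∀ ε : ℝ, 0 < ε → ε ≤ δ → 0 ≤ L + a * ε) :
    0 ≤ L := by
  by_contra hL
  push_neg at hL
  have ha : 0 ≤ a := by nlinarith [h δ hδ le_rfl]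
  have ha1 : 0 < a + 1 := by linarith
  have hL' : 0 < -L := by linarith
  have hεpos : 0 < -L/(a+1) := div_pos hL' ha1
  have h2 := h (min δ (-L/(a+1))) (lt_min hδ hεpos) (min_le_left _ _)
  have h3 : a * min δ (-L/(a+1)) ≤ a * (-L/(a+1)) :=
    mul_le_mul_of_nonneg_left (min_le_right _ _) ha
  have h4 : a * (-L/(a+1)) < -L := by
    rw [mul_div_assoc', div_lt_iff₀ ha1]; nlinarith
  linarith

lemma Df_pos (μ k p x1 x2 : ℝ) (hμ : 0 < μ) (hk : 2 ≤ k) (hp0 : 0 ≤ p) (hp1 : p < 1)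
    (hx1 : 0 ≤ x1) (hx1' : x1 < μ) (hx2 : 0 ≤ x2) (hx2' : x2 ≤ μ) :
    0 < Df μ k p x1 x2 := by
  unfold Df
  have h1 : 0 < k*μ - (1-p)*(x1+x2) := by nlinarith
  have h2 : 0 < μ*μ + μ*x1 + μ*x2 := by nlinarith
  exact mul_pos h1 h2

lemma playerCond (μ t k p u v : ℝ) (hμ : 0 < μ) (hk : 2 ≤ k) (hp0 : 0 ≤ p) (hp1 : p < 1)
    (hmt : μ + μ + t = k*μ)
    (hu : u ∈ Set.Icc 0 μ) (hv : v ∈ Set.Icc 0 μ)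
    (hD : 0 < k*μ - (1-p)*(u+v))
    (hr : ∀ x ∈ Set.Icc (0:ℝ) μ, r1 μ μ t p x v ≤ r1 μ μ t p u v) :
    (0 < u → 0 ≤ Gf μ k p u v) ∧ (u < μ → Gf μ k p u v ≤ 0) := by
  obtain ⟨hu0, huμ⟩ := hu
  obtain ⟨hv0, hvμ⟩ := hv
  have hDuv : 0 < Df μ k p u v := by
    unfold Df; exact mul_pos hD (by nlinarith)
  have hΦ : ∀ x, 0 ≤ x → x < μ →
      0 ≤ Nf μ p u v * Df μ k p x v - Nf μ p x v * Df μ k p u v := by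
    intro x hx0 hxμ
    have hDx : 0 < Df μ k p x v := Df_pos μ k p x v hμ hk hp0 hp1 hx0 hxμ hv0 hvμ
    have h := hr x ⟨hx0, hxμ.le⟩
    rw [r1_eq μ t k p x v hmt, r1_eq μ t k p u v hmt, div_le_div_iff₀ hDx hDuv] at h
    linarith
  constructor
  · intro hu0'
    have key : ∀ ε : ℝ, 0 < ε → ε ≤ u →
        0 ≤ Gf μ k p u v + ((1-p)*(Df μ k p u v - μ*Nf μ p u v)) * ε := by
      intro ε hε hεu
      have h := hΦ (u - ε) (by linarith) (by linarith)
      have hid : Nf μ p u v * Df μ k p (u-ε) v - Nf μ p (u-ε) v * Df μ k p u v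
          = ε * (Gf μ k p u v + ((1-p)*(Df μ k p u v - μ*Nf μ p u v)) * ε) := by
        unfold Gf Nf Df; ring
      nlinarith [hid ▸ h]
    have := one_sided _ _ u (by linarith) key
    linarith
  · intro huμ'
    have key : ∀ ε : ℝ, 0 < ε → ε ≤ (μ - u)/2 →
        0 ≤ -Gf μ k p u v + ((1-p)*(Df μ k p u v - μ*Nf μ p u v)) * ε := by
      intro ε hε hεu
      have h := hΦ (u + ε) (by linarith) (by linarith)
      have hid : Nf μ p u v * Df μ k p (u+ε) v - Nf μ p (u+ε) v * Df μ k p u v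
          = ε * (-Gf μ k p u v + ((1-p)*(Df μ k p u v - μ*Nf μ p u v)) * ε) := by
        unfold Gf Nf Df; ring
      nlinarith [hid ▸ h]
    have := one_sided _ _ _ (by linarith : (0:ℝ) < (μ-u)/2) key
    linarith

lemma Gtop_neg (μ k p z : ℝ) (hμ : 0 < μ) (hk : 2 ≤ k) (hp0 : 0 ≤ p) (hp1 : p < 1)
    (hz0 : 0 ≤ z) (hzμ : z ≤ μ) (hD : 0 < k*μ - (1-p)*(μ+z)) :
    Gf μ k p μ z < 0 := by
  have hq : 0 < 1 - p := by linarith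
  have hid : Gf μ k p μ z = μ*(1-p) *
      ((1-p)*z^3 + (1+(1-p)-k)*μ*z^2 + (4-2*k)*μ^2*z + (4+(1-p)-3*k)*μ^3) := by
    unfold Gf Nf Df; ring
  rw [hid]
  have hE : (1-p)*z^3 + (1+(1-p)-k)*μ*z^2 + (4-2*k)*μ^2*z + (4+(1-p)-3*k)*μ^3 < 0 := by
    have hEid : (1-p)*z^3 + (1+(1-p)-k)*μ*z^2 + (4-2*k)*μ^2*z + (4+(1-p)-3*k)*μ^3
        = -(μ^2*(k*μ - (1-p)*(μ+z))) - z^2*(k*μ - (1-p)*(μ+z)) - (μ-z)*z*μ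
          - 2*(k-2)*μ^2*z + p*μ^2*z - 2*(k-2)*μ^3 := by ring
    have hA1 : 0 < μ^2*(k*μ - (1-p)*(μ+z)) := mul_pos (by positivity) hD
    have hA2 : 2*p*μ^3 ≤ μ^2*(k*μ - (1-p)*(μ+z)) := by
      nlinarith [mul_nonneg (mul_nonneg hq.le (sub_nonneg.2 hzμ)) (mul_pos hμ hμ).le,
        mul_nonneg (sub_nonneg.2 hk) (by positivity : (0:ℝ) ≤ μ^3)]
    have hA3 : 0 ≤ p*(μ-z)*μ^2 := by
      have := sub_nonneg.2 hzμ; positivity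
    have hA4 : 0 ≤ z^2*(k*μ - (1-p)*(μ+z)) := mul_nonneg (sq_nonneg z) hD.le
    have hA5 : 0 ≤ (μ-z)*z*μ := by
      have := sub_nonneg.2 hzμ; positivity
    have hA6 : 0 ≤ (k-2)*μ^2*z := by
      have := sub_nonneg.2 hk; positivity
    have hA7 : 0 ≤ (k-2)*μ^3 := by
      have := sub_nonneg.2 hk; positivity
    nlinarith [hEid]
  nlinarith [mul_pos hμ hq]

lemma Gzz_pos (μ k p : ℝ) (hμ : 0 < μ) (hp1 : p < 1) : 0 < Gf μ k p 0 0 := by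
  have hid : Gf μ k p 0 0 = μ*(1-p)*μ^3 := by unfold Gf Nf Df; ring
  rw [hid]
  have h : 0 < 1 - p := by linarith
  positivity

lemma Gzero_pos (μ k p z : ℝ) (hμ : 0 < μ) (hk : 2 ≤ k) (hp0 : 0 ≤ p) (hp1 : p < 1)
    (hz0 : 0 < z) (hzμ : z < μ) (hG : Gf μ k p z 0 = 0) :
    0 < Gf μ k p 0 z := by
  have hq : 0 < 1 - p := by linarith
  have hid : Gf μ k p z 0 = μ^2*(1-p) *
      ((1+(1-p)-k)*z^2 + 2*(1-k)*μ*z + μ^2) := by unfold Gf Nf Df; ring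
  have hE6 : (1+(1-p)-k)*z^2 + 2*(1-k)*μ*z + μ^2 = 0 := by
    have h2 : μ^2*(1-p) ≠ 0 := by positivity
    have := hid ▸ hG
    exact (mul_eq_zero.mp this).resolve_left h2
  have hid2 : Gf μ k p 0 z = μ*(1-p) *
      ((1-p)*z^3 + (1-(1-p)-k)*μ*z^2 + (2-(1-p))*μ^2*z + μ^3) := by
    unfold Gf Nf Df; ring
  rw [hid2]
  have hE : 0 < (1-p)*z^3 + (1-(1-p)-k)*μ*z^2 + (2-(1-p))*μ^2*z + μ^3 := by
    nlinarith [hE6, mul_nonneg hq.le (mul_nonneg hz0.le (sq_nonneg (z - μ))),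
      mul_pos (mul_pos hμ hμ) hz0]
  positivity

lemma interior_sym (μ k p y1 y2 : ℝ) (hμ : 0 < μ) (hk : 2 ≤ k) (hp0 : 0 ≤ p) (hp1 : p < 1)
    (hy1 : 0 ≤ y1) (hy2 : 0 ≤ y2)
    (hG1 : Gf μ k p y1 y2 = 0) (hG2 : Gf μ k p y2 y1 = 0) : y1 = y2 := by
  have hq : 0 < 1 - p := by linarith
  have hid : Gf μ k p y1 y2 - Gf μ k p y2 y1 = (y1 - y2) * (μ*(1-p)*
      (-(1-p)*(y1+y2)^2 + 2*μ*(1-p)*(y1+y2) + μ^2*(1-p) - 2*k*μ^2)) := by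
    unfold Gf Nf Df; ring
  have hH : μ*(1-p)*(-(1-p)*(y1+y2)^2 + 2*μ*(1-p)*(y1+y2) + μ^2*(1-p) - 2*k*μ^2) < 0 := by
    have hin : -(1-p)*(y1+y2)^2 + 2*μ*(1-p)*(y1+y2) + μ^2*(1-p) - 2*k*μ^2 < 0 := by
      nlinarith [mul_nonneg hq.le (sq_nonneg (y1+y2-μ)), mul_pos hμ hμ]
    nlinarith [mul_pos hμ hq]
  have h0 : (y1 - y2) * (μ*(1-p)*
      (-(1-p)*(y1+y2)^2 + 2*μ*(1-p)*(y1+y2) + μ^2*(1-p) - 2*k*μ^2)) = 0 := by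
    rw [← hid, hG1, hG2]; ring
  rcases mul_eq_zero.mp h0 with h | h
  · linarith
  · exact absurd h hH.ne

lemma diag_quad (μ k p y : ℝ) (hμ : 0 < μ) (hp1 : p < 1) (hy : 0 ≤ y)
    (hG : Gf μ k p y y = 0) :
    2*(1-p)*y^2 - (2*k-1-p)*μ*y + μ^2 = 0 := by
  have hq : 0 < 1 - p := by linarith
  have hid : Gf μ k p y y
      = (μ*(1-p)*(2*y+μ)) * (2*(1-p)*y^2 - (2*k-1-p)*μ*y + μ^2) := by
    unfold Gf Nf Df; ring
  have hpos : 0 < μ*(1-p)*(2*y+μ) := by positivity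
  have := hid ▸ hG
  rcases mul_eq_zero.mp this with h | h
  · exact absurd h hpos.ne'
  · exact h

lemma root_unique (μ k p y xs : ℝ) (hμ : 0 < μ) (hk : 2 ≤ k) (hp0 : 0 ≤ p) (hp1 : p < 1)
    (hyμ : y < μ) (hxsμ : xs < μ)
    (hQy : 2*(1-p)*y^2 - (2*k-1-p)*μ*y + μ^2 = 0)
    (hQx : 2*(1-p)*xs^2 - (2*k-1-p)*μ*xs + μ^2 = 0) : y = xs := by
  have hq : 0 < 1 - p := by linarith
  by_contra hne
  have hfac : (y - xs) * (2*(1-p)*(y+xs) - (2*k-1-p)*μ) = 0 := by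
    linear_combination hQy - hQx
  have h2 : 2*(1-p)*(y+xs) = (2*k-1-p)*μ :=
    by have := (mul_eq_zero.mp hfac).resolve_left (sub_ne_zero.2 hne); linarith
  have hprod : μ^2 = 2*(1-p)*y*xs := by linear_combination hQy + (-y) * h2
  nlinarith [mul_pos (mul_pos hq (sub_pos.2 hyμ)) (sub_pos.2 hxsμ)]

lemma disc_nonneg (k p : ℝ) (hk : 2 ≤ k) (hp0 : 0 ≤ p) (hp1 : p < 1) :
    (1+p)^2 ≤ (2*k-1-p)^2 - 8*(1-p) := by
  nlinarith [mul_nonneg (sub_nonneg.2 hk) (by linarith : (0:ℝ) ≤ k+1-p)]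

lemma xs_facts (μ k p : ℝ) (hμ : 0 < μ) (hk : 2 ≤ k) (hp0 : 0 ≤ p) (hp1 : p < 1) :
    let s := Real.sqrt ((2*k-1-p)^2 - 8*(1-p))
    let xs := μ*(2*k-1-p-s)/(4*(1-p))
    0 < xs ∧ 2*xs ≤ μ ∧ (2*xs = μ ↔ k = 2) ∧
      2*(1-p)*xs^2 - (2*k-1-p)*μ*xs + μ^2 = 0 := by
  intro s xs
  have hq : 0 < 1 - p := by linarith
  have hd : 0 ≤ (2*k-1-p)^2 - 8*(1-p) :=
    le_trans (by positivity) (disc_nonneg k p hk hp0 hp1)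
  have hs0 : 0 ≤ s := Real.sqrt_nonneg _
  have hs2 : s^2 = (2*k-1-p)^2 - 8*(1-p) := Real.sq_sqrt hd
  have hA : 0 < 2*k-1-p := by linarith
  have hsA : s < 2*k-1-p := by nlinarith
  have hslow : 2*k-3+p ≤ s := by nlinarith [sq_nonneg (s - (2*k-3+p))]
  have hxs : 0 < xs := by
    show 0 < μ*(2*k-1-p-s)/(4*(1-p))
    have : 0 < 2*k-1-p-s := by linarith
    positivity
  have hhalf : 2*xs ≤ μ := by
    show 2*(μ*(2*k-1-p-s)/(4*(1-p))) ≤ μ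
    rw [mul_div_assoc', div_le_iff₀ (by positivity : (0:ℝ) < 4*(1-p))]
    nlinarith
  refine ⟨hxs, hhalf, ⟨?_, ?_⟩, ?_⟩
  · intro h
    have hxseq : xs = μ/2 := by linarith
    have : μ*(2*k-1-p-s) = (μ/2)*(4*(1-p)) := by
      rw [← hxseq]; show _ = (μ*(2*k-1-p-s)/(4*(1-p)))*(4*(1-p))
      field_simp
    have hseq : s = 2*k-3+p := by nlinarith
    nlinarith [hs2, hseq]
  · intro h
    subst h
    have : s = 1 + p := by
      have h2 : ((2:ℝ)*2-1-p)^2 - 8*(1-p) = (1+p)^2 := by ring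
      rw [show s = Real.sqrt ((2*2-1-p)^2 - 8*(1-p)) from rfl, h2,
        Real.sqrt_sq (by linarith)]
    show 2*(μ*(2*2-1-p-s)/(4*(1-p))) = μ
    rw [this]; field_simp; ring
  · show 2*(1-p)*(μ*(2*k-1-p-s)/(4*(1-p)))^2 - (2*k-1-p)*μ*(μ*(2*k-1-p-s)/(4*(1-p))) + μ^2 = 0
    field_simp
    linear_combination (2*μ^2) * hs2

lemma eq_ineq (μ k p xs x : ℝ) (hμ : 0 < μ) (hk : 2 ≤ k) (hp0 : 0 ≤ p) (hp1 : p < 1)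
    (hxs0 : 0 < xs) (hxs : 2*xs ≤ μ)
    (hQ : 2*(1-p)*xs^2 - (2*k-1-p)*μ*xs + μ^2 = 0)
    (hx0 : 0 ≤ x) (hxμ : x ≤ μ) :
    Nf μ p x xs * Df μ k p xs xs ≤ Nf μ p xs xs * Df μ k p x xs := by
  have hq : 0 < 1 - p := by linarith
  have key : Nf μ p xs xs * Df μ k p x xs - Nf μ p x xs * Df μ k p xs xs
      = (1-p)*μ^2*(k*μ - 2*(1-p)*xs)*(x-xs)^2
        + (μ*(1-p)*(xs-x)*(xs+x+μ)) * (2*(1-p)*xs^2 - (2*k-1-p)*μ*xs + μ^2) := by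
    unfold Nf Df; ring
  have hkpos : 0 < k*μ - 2*(1-p)*xs := by nlinarith
  rw [hQ, mul_zero, add_zero] at key
  nlinarith [key, mul_nonneg (mul_nonneg (mul_nonneg hq.le (sq_nonneg μ)) hkpos.le) (sq_nonneg (x-xs))]

set_option maxHeartbeats 2000000 in
/-- Symmetric case `m1 = m2 = m/k`, `k ≥ 2`: explicit unique Nash equilibrium,
and the bound `x1* + x2* ≤ (m1+m2)/2` with equality iff `k = 2`. -/
theorem stmt9 (m1 m2 t p k : ℝ) (hm1 : 0 < m1) (hm2 : 0 < m2) (ht : 0 ≤ t)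
    (hp0 : 0 ≤ p) (hp1 : p < 1) (hk : 2 ≤ k)
    (h1 : m1 = (m1+m2+t)/k) (h2 : m2 = (m1+m2+t)/k) :
    let m := m1 + m2 + t
    let xs : ℝ := m/(4*(1-p)*k) *
      (2*k - (1+p) - Real.sqrt ((2*k - (1+p))^2 - 8*(1-p)))
    IsNash m1 m2 t p xs xs ∧
    (∀ y1 y2 : ℝ, IsNash m1 m2 t p y1 y2 → y1 = xs ∧ y2 = xs) ∧
    xs + xs ≤ (m1 + m2)/2 ∧
    (xs + xs = (m1 + m2)/2 ↔ k = 2) := by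
  have hm21 : m2 = m1 := by rw [h2, ← h1]
  subst hm21
  intro m xs
  set μ := m2 with hμdef
  have hμ : 0 < μ := hm2
  have hq : 0 < 1 - p := by linarith
  have hk0 : (0:ℝ) < k := by linarith
  have hmt : μ + μ + t = k*μ := by
    rw [eq_div_iff hk0.ne'] at h1
    linarith
  have hxs_eq : xs = μ*(2*k-1-p-Real.sqrt ((2*k-1-p)^2 - 8*(1-p)))/(4*(1-p)) := by
    show m/(4*(1-p)*k) * (2*k - (1+p) - Real.sqrt ((2*k - (1+p))^2 - 8*(1-p))) = _
    have hmeq : m = k*μ := hmt ▸ rfl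
    rw [hmeq, show (2*k - (1+p))^2 - 8*(1-p) = (2*k-1-p)^2 - 8*(1-p) by ring]
    field_simp
    ring
  obtain ⟨hxs0, hxshalf, hxsiff, hQ⟩ := xs_facts μ k p hμ hk hp0 hp1
  rw [← hxs_eq] at hxs0 hxshalf hxsiff hQ
  have hxsμ : xs < μ := by linarith
  have hswap : ∀ a b : ℝ, r2 μ μ t p a b = r1 μ μ t p b a := fun a b => r2_swap μ t p a b
  have hDfx : ∀ x : ℝ, 0 ≤ x → x ≤ μ → 0 < Df μ k p x xs := by
    intro x hx0 hxμ'
    unfold Df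
    have h1' : 0 < k*μ - (1-p)*(x+xs) := by nlinarith
    have h2' : 0 < μ*μ + μ*x + μ*xs := by nlinarith
    exact mul_pos h1' h2'
  have hbest : ∀ x ∈ Set.Icc (0:ℝ) μ, r1 μ μ t p x xs ≤ r1 μ μ t p xs xs := by
    intro x hx
    obtain ⟨hx0, hxμ'⟩ := hx
    rw [r1_eq μ t k p x xs hmt, r1_eq μ t k p xs xs hmt,
      div_le_div_iff₀ (hDfx x hx0 hxμ') (hDfx xs hxs0.le (by linarith))]
    exact eq_ineq μ k p xs x hμ hk hp0 hp1 hxs0 hxshalf hQ hx0 hxμ'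
  refine ⟨⟨⟨hxs0.le, by linarith⟩, ⟨hxs0.le, by linarith⟩, hbest, ?_⟩, ?_, ?_, ?_⟩
  · -- player 2 at equilibrium
    intro x hx
    rw [hswap, hswap]
    exact hbest x hx
  · -- uniqueness
    intro y1 y2 hN
    obtain ⟨⟨hy10, hy1μ⟩, ⟨hy20, hy2μ⟩, hr1, hr2⟩ := hN
    have hr2' : ∀ x ∈ Set.Icc (0:ℝ) μ, r1 μ μ t p x y1 ≤ r1 μ μ t p y2 y1 := by
      intro x hx
      have := hr2 x hx
      rwa [hswap, hswap] at this
    by_cases hD : 0 < k*μ - (1-p)*(y1+y2)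
    · have c1 := playerCond μ t k p y1 y2 hμ hk hp0 hp1 hmt ⟨hy10, hy1μ⟩ ⟨hy20, hy2μ⟩ hD hr1
      have c2 := playerCond μ t k p y2 y1 hμ hk hp0 hp1 hmt ⟨hy20, hy2μ⟩ ⟨hy10, hy1μ⟩
        (by linarith [hD] : 0 < k*μ - (1-p)*(y2+y1)) hr2'
      have hy1top : y1 < μ := by
        rcases lt_or_eq_of_le hy1μ with h | h
        · exact h
        · exfalso
          have hg := c1.1 (by linarith)
          rw [h] at hg hD
          exact absurd hg (not_le.2 (Gtop_neg μ k p y2 hμ hk hp0 hp1 hy20 hy2μ hD))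
      have hy2top : y2 < μ := by
        rcases lt_or_eq_of_le hy2μ with h | h
        · exact h
        · exfalso
          have hg := c2.1 (by linarith)
          rw [h] at hg hD
          have hD' : 0 < k*μ - (1-p)*(μ+y1) := by linarith
          exact absurd hg (not_le.2 (Gtop_neg μ k p y1 hμ hk hp0 hp1 hy10 hy1μ hD'))
      have hy1pos : 0 < y1 := by
        rcases lt_or_eq_of_le hy10 with h | h
        · exact h
        · exfalso
          have hg := c1.2 hy1top
          rw [← h] at hg
          rcases lt_or_eq_of_le hy20 with h2' | h2'
          · -- y2 interior: G(y2,0) = 0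
            have hG2 : Gf μ k p y2 y1 = 0 :=
              le_antisymm (c2.2 hy2top) (c2.1 h2')
            rw [← h] at hG2
            have := Gzero_pos μ k p y2 hμ hk hp0 hp1 h2' hy2top hG2
            linarith
          · rw [← h2'] at hg
            have := Gzz_pos μ k p hμ hp1
            linarith
      have hy2pos : 0 < y2 := by
        rcases lt_or_eq_of_le hy20 with h | h
        · exact h
        · exfalso
          have hg := c2.2 hy2top
          rw [← h] at hg
          have hG1 : Gf μ k p y1 y2 = 0 :=
            le_antisymm (c1.2 hy1top) (c1.1 hy1pos)
          rw [← h] at hG1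
          have := Gzero_pos μ k p y1 hμ hk hp0 hp1 hy1pos hy1top hG1
          linarith
      have hG1 : Gf μ k p y1 y2 = 0 := le_antisymm (c1.2 hy1top) (c1.1 hy1pos)
      have hG2 : Gf μ k p y2 y1 = 0 := le_antisymm (c2.2 hy2top) (c2.1 hy2pos)
      have hy12 : y1 = y2 := interior_sym μ k p y1 y2 hμ hk hp0 hp1 hy10 hy20 hG1 hG2
      rw [← hy12] at hG1
      have hQy := diag_quad μ k p y1 hμ hp1 hy10 hG1
      have hy1xs : y1 = xs := root_unique μ k p y1 xs hμ hk hp0 hp1 hy1top hxsμ hQy hQ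
      exact ⟨hy1xs, by rw [← hy12, hy1xs]⟩
    · -- corner case
      exfalso
      push_neg at hD
      have hkey : k*μ ≤ (1-p)*(y1+y2) := by linarith
      have hsum : y1 + y2 ≤ 2*μ := by linarith
      have hchain : (1-p)*(y1+y2) ≤ (1-p)*(2*μ) :=
        mul_le_mul_of_nonneg_left hsum hq.le
      have hchain2 : (1-p)*(2*μ) ≤ 2*μ := by nlinarith [mul_nonneg hp0 hμ.le]
      have hk2 : k = 2 := by
        have hkle : k*μ ≤ 2*μ := by linarith
        have := (mul_le_mul_iff_of_pos_right hμ).mp hkle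
        linarith
      have hp00 : p = 0 := by
        by_contra hne
        have hppos : 0 < p := lt_of_le_of_ne hp0 (Ne.symm hne)
        rw [hk2] at hkey
        nlinarith [mul_pos hppos hμ]
      rw [hp00, hk2] at hkey
      have hy1e : y1 = μ := by linarith
      have hy2e : y2 = μ := by linarith
      have hcontra := hr1 0 ⟨le_refl 0, hμ.le⟩
      rw [r1_eq μ t k p 0 y2 hmt, r1_eq μ t k p y1 y2 hmt] at hcontra
      have hDzero : Df μ k p y1 y2 = 0 := by
        unfold Df
        rw [hy1e, hy2e, hk2, hp00]; ring
      rw [hDzero, div_zero] at hcontra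
      have hnum : 0 < Nf μ p 0 y2 := by
        unfold Nf
        rw [hy2e, hp00]; nlinarith
      have hden : 0 < Df μ k p 0 y2 := by
        unfold Df
        rw [hy2e, hk2, hp00]; nlinarith [mul_pos (mul_pos hμ hμ) hμ]
      have := div_pos hnum hden
      linarith
  · show xs + xs ≤ (μ + μ)/2
    linarith
  · show xs + xs = (μ + μ)/2 ↔ k = 2
    constructor
    · intro h
      exact hxsiff.1 (by linarith)
    · intro h
      have := hxsiff.2 h
      linarith
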